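/- Let g : (0, h) → ℝ be measurable, non-negative, and non-increasing with x·g(x) integrable, and let a > 0, h > 0. Then ∫₀^{h} g(x) sin(a x) dx ≥ 0. -/

import Mathlib

open MeasureTheory Real Set

lemma abs_sin_le_self {x : ℝ} (hx : 0 ≤ x) : |Real.sin x| ≤ x := by
  rw [abs_le]
  refine ⟨?_, Real.sin_le hx⟩
  rcases le_or_gt x 1 with h1 | h1
  · have : 0 ≤ Real.sin x :=
      Real.sin_nonneg_of_nonneg_of_le_pi hx (h1.trans (by linarith [Real.pi_gt_three]))
    linarith
  · have := Real.neg_one_le_sin x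
    linarith

lemma integral_sin_Ioo_nonneg (a s : ℝ) (ha : 0 < a) (hs : 0 ≤ s) :
    0 ≤ ∫ x in Ioo 0 s, Real.sin (a * x) := by
  rw [← MeasureTheory.integral_Ioc_eq_integral_Ioo,
    ← intervalIntegral.integral_of_le hs,
    intervalIntegral.integral_comp_mul_left (fun x => Real.sin x) ha.ne']
  rw [mul_zero, integral_sin, Real.cos_zero, smul_eq_mul]
  have hc : Real.cos (a * s) ≤ 1 := Real.cos_le_one _
  have h1 : (0:ℝ) ≤ 1 - Real.cos (a * s) := by linarith
  positivity

lemma integral_sin_downward (a h : ℝ) (ha : 0 < a) (S : Set ℝ)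
    (hsub : S ⊆ Ioo 0 h)
    (hdc : ∀ x ∈ S, ∀ y, 0 < y → y < x → y ∈ S) :
    0 ≤ ∫ x in S, Real.sin (a * x) := by
  rcases S.eq_empty_or_nonempty with rfl | hne
  · simp
  · set s := sSup S with hsdef
    have hbdd : BddAbove S := ⟨h, fun x hx => (hsub hx).2.le⟩
    have hspos : 0 < s := by
      obtain ⟨x, hx⟩ := hne
      exact lt_of_lt_of_le (hsub hx).1 (le_csSup hbdd hx)
    have h1 : Ioo 0 s ⊆ S := by
      intro x hx
      obtain ⟨y, hyS, hxy⟩ := exists_lt_of_lt_csSup hne hx.2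
      exact hdc y hyS x hx.1 hxy
    have h2 : S ⊆ Ioc 0 s := fun x hx => ⟨(hsub hx).1, le_csSup hbdd hx⟩
    have hae : S =ᵐ[volume] Ioo 0 s := by
      rw [MeasureTheory.ae_eq_set]
      constructor
      · refine measure_mono_null (fun x hx => ?_) (volume_singleton (a := s))
        have hx1 := h2 hx.1
        have hx2 := hx.2
        simp only [mem_Ioo, not_and, not_lt] at hx2
        have : s ≤ x := hx2 hx1.1
        exact le_antisymm hx1.2 this
      · rw [Set.diff_eq_empty.mpr h1]
        simp
    rw [MeasureTheory.setIntegral_congr_set hae]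
    exact integral_sin_Ioo_nonneg a s ha hspos.le

theorem stmt2 (g : ℝ → ℝ) (h a : ℝ) (hh : 0 < h) (ha : 0 < a)
    (hmeas : Measurable g)
    (hnonneg : ∀ x ∈ Ioo 0 h, 0 ≤ g x)
    (hmono : AntitoneOn g (Ioo 0 h))
    (hint : IntegrableOn (fun x => x * g x) (Ioo 0 h)) :
    0 ≤ ∫ x in Ioo 0 h, g x * Real.sin (a * x) := by
  set μ := volume.restrict (Ioo (0:ℝ) h) with hμ
  set ν := volume.restrict (Ioi (0:ℝ)) with hν
  set F : ℝ → ℝ → ℝ := fun x t => if t < g x then Real.sin (a * x) else 0 with hF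
  -- measurability of the uncurried function
  have hFmeas : Measurable (Function.uncurry F) := by
    apply Measurable.ite
    · exact measurableSet_lt measurable_snd (hmeas.comp measurable_fst)
    · exact (Real.measurable_sin.comp (measurable_fst.const_mul a))
    · exact measurable_const
  -- F x as an indicator
  have hFind : ∀ x : ℝ, F x = (Iio (g x)).indicator (fun _ => Real.sin (a * x)) := by
    intro x
    funext t
    simp only [hF, indicator, mem_Iio]
  -- inner integral in t
  have hinner : ∀ x : ℝ, 0 ≤ g x → ∫ t, F x t ∂ν = g x * Real.sin (a * x) := by
    intro x hgx
    rw [hFind x, MeasureTheory.integral_indicator measurableSet_Iio,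
      MeasureTheory.setIntegral_const, hν,
      measureReal_restrict_apply measurableSet_Iio,
      Set.inter_comm (Iio (g x)) (Ioi 0), Set.Ioi_inter_Iio, Real.volume_real_Ioo_of_le hgx, sub_zero,
      smul_eq_mul]
  -- inner integral of the norm
  have hinnernorm : ∀ x : ℝ, 0 ≤ g x →
      ∫ t, ‖F x t‖ ∂ν = g x * |Real.sin (a * x)| := by
    intro x hgx
    have : (fun t => ‖F x t‖) = (Iio (g x)).indicator (fun _ => |Real.sin (a * x)|) := by
      funext t
      simp only [hF, indicator, mem_Iio]
      split <;> simp [Real.norm_eq_abs]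
    rw [this, MeasureTheory.integral_indicator measurableSet_Iio,
      MeasureTheory.setIntegral_const, hν,
      measureReal_restrict_apply measurableSet_Iio,
      Set.inter_comm (Iio (g x)) (Ioi 0), Set.Ioi_inter_Iio, Real.volume_real_Ioo_of_le hgx, sub_zero,
      smul_eq_mul]
  -- integrability on the product
  have hFint : Integrable (Function.uncurry F) (μ.prod ν) := by
    rw [MeasureTheory.integrable_prod_iff hFmeas.aestronglyMeasurable]
    constructor
    · filter_upwards [MeasureTheory.ae_restrict_mem measurableSet_Ioo] with x hx
      show Integrable (F x) ν
      rw [hFind x]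
      rw [MeasureTheory.integrable_indicator_iff measurableSet_Iio]
      refine (MeasureTheory.integrableOn_const_iff).mpr (Or.inr ?_)
      rw [hν, MeasureTheory.Measure.restrict_apply measurableSet_Iio,
        Set.inter_comm, Set.Ioi_inter_Iio, Real.volume_Ioo]
      exact ENNReal.ofReal_lt_top
    · have hbound : Integrable (fun x => a * (x * g x)) μ := hint.const_mul a
      refine hbound.mono' ?_ ?_
      · exact (hFmeas.norm.stronglyMeasurable.integral_prod_right').aestronglyMeasurable
      · filter_upwards [MeasureTheory.ae_restrict_mem measurableSet_Ioo] with x hx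
        have hgx := hnonneg x hx
        show ‖∫ t, ‖F x t‖ ∂ν‖ ≤ a * (x * g x)
        rw [hinnernorm x hgx]
        have h1 : |Real.sin (a * x)| ≤ a * x := abs_sin_le_self (mul_nonneg ha.le hx.1.le)
        have h2 : g x * |Real.sin (a * x)| ≤ g x * (a * x) :=
          mul_le_mul_of_nonneg_left h1 hgx
        rw [Real.norm_eq_abs, abs_of_nonneg (by positivity)]
        nlinarith
  -- rewrite the target via Fubini
  have step1 : ∫ x, g x * Real.sin (a * x) ∂μ = ∫ x, ∫ t, F x t ∂ν ∂μ := by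
    rw [hμ]
    refine MeasureTheory.setIntegral_congr_fun measurableSet_Ioo (fun x hx => ?_)
    exact (hinner x (hnonneg x hx)).symm
  rw [step1, MeasureTheory.integral_integral_swap hFint]
  -- outer integral in t is nonneg
  rw [hν]
  refine MeasureTheory.setIntegral_nonneg measurableSet_Ioi (fun t ht => ?_)
  -- inner integral in x: indicator over the superlevel set
  have : ∫ x, F x t ∂μ = ∫ x in Ioo 0 h ∩ {x | t < g x}, Real.sin (a * x) := by
    have : (fun x => F x t) = ({x | t < g x}).indicator (fun x => Real.sin (a * x)) := by
      funext x
      simp only [hF, indicator, mem_setOf_eq]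
    rw [this, hμ, MeasureTheory.setIntegral_indicator (measurableSet_lt measurable_const hmeas)]
  rw [this]
  refine integral_sin_downward a h ha _ (Set.inter_subset_left) ?_
  rintro x ⟨hx1, hx2⟩ y hy0 hyx
  have hyIoo : y ∈ Ioo 0 h := ⟨hy0, hyx.trans hx1.2⟩
  refine ⟨hyIoo, ?_⟩
  exact lt_of_lt_of_le hx2 (hmono hyIoo hx1 hyx.le)
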